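/- arXiv:1205.5352 — 2 statements merged into one kernel-verified Lean document; each statement's English description precedes it below -/
import Mathlib

section
/- For all elements a, b of 𝒞 the following two equivalences hold: (i) f_0† a + b = 0 if and only if f_0† a + f_0† f_0 b = 0 and f_0 f_0† b = 0; (ii) f_0 a + b = 0 if and only if f_0 a + f_0 f_0† b = 0 and f_0† f_0 b = 0. (Applied pointwise with a the derivative ∂_{z_0}f, resp. ∂_{z̄_0}f, and b the value of ∂_𝐳 f, resp. ∂_{𝐳†} f, this shows that the h-monogenic system (f_0†∂_{z_0} + ∂_𝐳)f = 0 = (f_0∂_{z̄_0} + ∂_{𝐳†})f is equivalent to the four-equation system (f_0†∂_{z_0} + f_0†f_0 ∂_𝐳)f = 0, f_0f_0†∂_𝐳 f = 0, (f_0∂_{z̄_0} + f_0f_0† ∂_{𝐳†})f = 0, f_0†f_0 ∂_{𝐳†} f = 0.) -/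
noncomputable section

/-- The quadratic form `Q(x) = -(x_1^2 + ⋯ + x_m^2)` on `ℂ^m`. -/
def Qform (m : ℕ) : QuadraticForm ℂ (Fin m → ℂ) :=
  QuadraticMap.weightedSumSquares ℂ (fun _ : Fin m => (-1 : ℂ))

/-- The complex Clifford algebra of `ℂ^m` with `Q(x) = -∑ x_j^2`. -/
abbrev Cl (m : ℕ) : Type := CliffordAlgebra (Qform m)

/-- The generators `e_j`, images of the standard basis vectors. -/
def gen (m : ℕ) (j : Fin m) : Cl m := CliffordAlgebra.ι (Qform m) (Pi.single j 1)

/-- The Witt basis element `f_j = (1/2)(e_j - i e_{n+j})`. -/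
def fw (n : ℕ) (j : Fin n) : Cl (2 * n) :=
  (2⁻¹ : ℂ) • (gen (2 * n) ⟨j.val, by have := j.isLt; omega⟩
    - Complex.I • gen (2 * n) ⟨n + j.val, by have := j.isLt; omega⟩)

/-- The Witt basis element `f_j† = -(1/2)(e_j + i e_{n+j})`. -/
def fwd (n : ℕ) (j : Fin n) : Cl (2 * n) :=
  -((2⁻¹ : ℂ) • (gen (2 * n) ⟨j.val, by have := j.isLt; omega⟩
    + Complex.I • gen (2 * n) ⟨n + j.val, by have := j.isLt; omega⟩))

/-- The Hermitian vector variable `𝐳 = ∑ z_j f_j`. -/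
def zvec (n : ℕ) (z : Fin n → ℂ) : Cl (2 * n) := ∑ j, z j • fw n j

/-- The Hermitian conjugate vector variable `𝐳† = ∑ conj(z_j) f_j†`. -/
def zvecd (n : ℕ) (z : Fin n → ℂ) : Cl (2 * n) :=
  ∑ j, (starRingEnd ℂ) (z j) • fwd n j

/-- The fermionic Euler operator `β = ∑ f_j† f_j`. -/
def beta (n : ℕ) : Cl (2 * n) := ∑ j, fwd n j * fw n j


lemma Qform_single (m : ℕ) (j : Fin m) : Qform m (Pi.single j 1) = -1 := by
  simp [Qform, QuadraticMap.weightedSumSquares_apply, Pi.single_apply]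

lemma gen_sq (m : ℕ) (j : Fin m) : gen m j * gen m j = -1 := by
  rw [gen, CliffordAlgebra.ι_sq_scalar, Qform_single, map_neg, map_one]

lemma gen_anticomm (m : ℕ) (j k : Fin m) (h : j ≠ k) :
    gen m j * gen m k + gen m k * gen m j = 0 := by
  rw [gen, gen, CliffordAlgebra.ι_mul_ι_add_swap]
  have hp : QuadraticMap.polar (Qform m) (Pi.single j 1) (Pi.single k 1) = 0 := by
    simp only [QuadraticMap.polar, Qform, QuadraticMap.weightedSumSquares_apply]
    rw [← Finset.sum_sub_distrib, ← Finset.sum_sub_distrib]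
    apply Finset.sum_eq_zero
    intro i _
    simp only [Pi.add_apply, Pi.single_apply, smul_eq_mul]
    rcases eq_or_ne i j with rfl | hij <;> rcases eq_or_ne i k with rfl | hik <;> simp_all <;> ring
  rw [hp, map_zero]

section Aux
variable {A : Type*} [Ring A] [Algebra ℂ A]

lemma witt_p_sq (u v : A) (hu : u * u = -1) (hv : v * v = -1)
    (huv : u * v + v * u = 0) :
    ((2⁻¹ : ℂ) • (u - Complex.I • v)) * ((2⁻¹ : ℂ) • (u - Complex.I • v)) = 0 := by
  have hvu : v * u = -(u * v) := eq_neg_of_add_eq_zero_right huv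
  simp only [smul_mul_assoc, mul_smul_comm, sub_mul, mul_sub, smul_smul, smul_sub,
    hu, hvu, hv, smul_neg, neg_smul, neg_neg, one_smul, sub_neg_eq_add]
  match_scalars <;> ring_nf <;> simp [Complex.I_sq]

lemma witt_q_sq (u v : A) (hu : u * u = -1) (hv : v * v = -1)
    (huv : u * v + v * u = 0) :
    (-((2⁻¹ : ℂ) • (u + Complex.I • v))) * (-((2⁻¹ : ℂ) • (u + Complex.I • v))) = 0 := by
  have hvu : v * u = -(u * v) := eq_neg_of_add_eq_zero_right huv
  simp only [neg_mul_neg, smul_mul_assoc, mul_smul_comm, add_mul, mul_add, smul_smul, smul_add,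
    hu, hvu, hv, smul_neg, neg_smul, neg_neg, one_smul]
  match_scalars <;> ring_nf <;> simp [Complex.I_sq]

lemma witt_pq (u v : A) (hu : u * u = -1) (hv : v * v = -1)
    (huv : u * v + v * u = 0) :
    ((2⁻¹ : ℂ) • (u - Complex.I • v)) * (-((2⁻¹ : ℂ) • (u + Complex.I • v)))
      + (-((2⁻¹ : ℂ) • (u + Complex.I • v))) * ((2⁻¹ : ℂ) • (u - Complex.I • v)) = 1 := by
  have hvu : v * u = -(u * v) := eq_neg_of_add_eq_zero_right huv
  simp only [mul_neg, neg_mul, smul_mul_assoc, mul_smul_comm, add_mul, mul_add, sub_mul, mul_sub,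
    smul_smul, smul_add, smul_sub, hu, hvu, hv, smul_neg, neg_smul, neg_neg, one_smul]
  rw [show (1 : A) = (1 : ℂ) • (1 : A) by simp]
  match_scalars <;> ring_nf <;> simp [Complex.I_sq] <;> ring

lemma split_abstract (p q a b : A) (hpp : p * p = 0) (hqq : q * q = 0)
    (hpq : p * q + q * p = 1) :
    q * a + b = 0 ↔ q * a + q * p * b = 0 ∧ p * q * b = 0 := by
  have key1 : q * p * q = q := by
    have h' : p * q = 1 - q * p := eq_sub_of_add_eq hpq
    rw [mul_assoc, h', mul_sub, mul_one, ← mul_assoc, hqq, zero_mul, sub_zero]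
  constructor
  · intro h
    have hb : b = -(q * a) := eq_neg_of_add_eq_zero_right h
    subst hb
    constructor
    · rw [mul_neg, ← mul_assoc, key1, add_neg_cancel]
    · rw [mul_neg, neg_eq_zero, ← mul_assoc, mul_assoc p q q, hqq, mul_zero, zero_mul]
  · rintro ⟨h1, h2⟩
    have hb : b = q * p * b := by
      calc b = (p * q + q * p) * b := by rw [hpq, one_mul]
      _ = p * q * b + q * p * b := by rw [add_mul]
      _ = q * p * b := by rw [h2, zero_add]
    rw [← hb] at h1
    exact h1
end Aux

/-- The algebraic equivalences underlying the splitting of the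
h-monogenic system into the four-equation system: for all `a, b` in the Clifford
algebra of `ℂ^{2n+2}` (with `f_0, f_0†` the first Witt basis elements),
(i) `f_0† a + b = 0 ↔ f_0† a + f_0† f_0 b = 0 ∧ f_0 f_0† b = 0`;
(ii) `f_0 a + b = 0 ↔ f_0 a + f_0 f_0† b = 0 ∧ f_0† f_0 b = 0`. -/
theorem hmonogenic_system_split (n : ℕ) (hn : 1 ≤ n)
    (a b : Cl (2 * (n + 1))) :
    (fwd (n + 1) 0 * a + b = 0 ↔
      fwd (n + 1) 0 * a + fwd (n + 1) 0 * fw (n + 1) 0 * b = 0 ∧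
      fw (n + 1) 0 * fwd (n + 1) 0 * b = 0) ∧
    (fw (n + 1) 0 * a + b = 0 ↔
      fw (n + 1) 0 * a + fw (n + 1) 0 * fwd (n + 1) 0 * b = 0 ∧
      fwd (n + 1) 0 * fw (n + 1) 0 * b = 0) := by
  have hfw : fw (n + 1) 0 = (2⁻¹ : ℂ) • (gen (2 * (n + 1)) ⟨0, by omega⟩
      - Complex.I • gen (2 * (n + 1)) ⟨n + 1, by omega⟩) := by
    rw [fw]; norm_num
  have hfwd : fwd (n + 1) 0 = -((2⁻¹ : ℂ) • (gen (2 * (n + 1)) ⟨0, by omega⟩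
      + Complex.I • gen (2 * (n + 1)) ⟨n + 1, by omega⟩)) := by
    rw [fwd]; norm_num
  have huu := gen_sq (2 * (n + 1)) ⟨0, by omega⟩
  have hvv := gen_sq (2 * (n + 1)) ⟨n + 1, by omega⟩
  have huv : gen (2 * (n + 1)) ⟨0, by omega⟩ * gen (2 * (n + 1)) ⟨n + 1, by omega⟩
      + gen (2 * (n + 1)) ⟨n + 1, by omega⟩ * gen (2 * (n + 1)) ⟨0, by omega⟩ = 0 := by
    apply gen_anticomm
    intro h
    have := Fin.val_eq_of_eq h
    simp at this
  have hpp : fw (n+1) 0 * fw (n+1) 0 = 0 := by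
    rw [hfw]; exact witt_p_sq _ _ huu hvv huv
  have hqq : fwd (n+1) 0 * fwd (n+1) 0 = 0 := by
    rw [hfwd]; exact witt_q_sq _ _ huu hvv huv
  have hpq : fw (n+1) 0 * fwd (n+1) 0 + fwd (n+1) 0 * fw (n+1) 0 = 1 := by
    rw [hfw, hfwd]; exact witt_pq _ _ huu hvv huv
  have hqp : fwd (n+1) 0 * fw (n+1) 0 + fw (n+1) 0 * fwd (n+1) 0 = 1 := by
    exact (add_comm _ _).trans hpq
  exact ⟨split_abstract _ _ a b hpp hqq hpq,
    split_abstract _ _ a b hqq hpp hqp⟩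
end
end

section
/- Let a₁, a₂ : ℝ → ℂ be differentiable functions, and define F : ℝ^{2n} → 𝒞 by F(x,y) = a₁(ν)·1 + a₂(ν)·𝐳†(z)𝐳(z), where z_j = x_j + i y_j, ν = |z|² = Σ_{j=1}^n (x_j² + y_j²), 𝐳(z) = Σ_{j=1}^n z_j f_j and 𝐳†(z) = Σ_{j=1}^n conj(z_j) f_j†. Then F is differentiable and at every point ∂_z† F = (a₁′(ν) + (n+1)a₂(ν) + ν a₂′(ν))·𝐳(z) − a₂(ν)·𝐳(z)β, where β = Σ_{j=1}^n f_j† f_j; equivalently, ∂_z† F = 𝐳(z)·(a₁′(ν) + (n+1−β)a₂(ν) + ν a₂′(ν)) with the convention that scalars commute with 𝐳(z). -/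
noncomputable section

/-- The domain `ℝ^{2n}`, with coordinates written `(x_1,…,x_n,y_1,…,y_n)`. -/
abbrev Dom (n : ℕ) : Type := (Fin n → ℝ) × (Fin n → ℝ)

/-- The coordinate direction `x_j`. -/
def ex (n : ℕ) (j : Fin n) : Dom n := (Pi.single j 1, 0)

/-- The coordinate direction `y_j`. -/
def ey (n : ℕ) (j : Fin n) : Dom n := (0, Pi.single j 1)

/-- The complex coordinates `z_j = x_j + i y_j` of a point. -/
def zc (n : ℕ) (pt : Dom n) : Fin n → ℂ := fun j => (pt.1 j : ℂ) + Complex.I * (pt.2 j : ℂ)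

/-- `ν = |z|² = ∑ (x_j² + y_j²)`. -/
def nu (n : ℕ) (pt : Dom n) : ℝ := ∑ j, ((pt.1 j) ^ 2 + (pt.2 j) ^ 2)

/-- `g' pt v` is the directional (line) derivative of the Clifford-algebra valued
function `g` at `pt` in the direction `v`, tested against all `ℂ`-linear
functionals (an equivalent description of differentiability, as the Clifford
algebra is a finite-dimensional complex vector space). -/
def IsWeakLineDeriv (n : ℕ) (g : Dom n → Cl (2 * n))
    (g' : Dom n → Dom n → Cl (2 * n)) : Prop :=
  ∀ φ : Module.Dual ℂ (Cl (2 * n)), ∀ pt v,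
    HasLineDerivAt ℝ (fun q => φ (g q)) (φ (g' pt v)) pt v

/-- The Hermitian Dirac operator `∂_z F = ∑_j f_j† (1/2)(∂_{x_j} F − i ∂_{y_j} F)`
expressed through the (directional) derivative `F'` of `F`. -/
def DzOf (n : ℕ) (F' : Dom n → Dom n → Cl (2 * n)) (pt : Dom n) : Cl (2 * n) :=
  ∑ j, fwd n j * ((2⁻¹ : ℂ) • (F' pt (ex n j) - Complex.I • F' pt (ey n j)))

/-- The Hermitian Dirac operator `∂_z† F = ∑_j f_j (1/2)(∂_{x_j} F + i ∂_{y_j} F)`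
expressed through the (directional) derivative `F'` of `F`. -/
def DzdOf (n : ℕ) (F' : Dom n → Dom n → Cl (2 * n)) (pt : Dom n) : Cl (2 * n) :=
  ∑ j, fw n j * ((2⁻¹ : ℂ) • (F' pt (ex n j) + Complex.I • F' pt (ey n j)))


section Aux

set_option linter.unnecessarySeqFocus false
set_option linter.unreachableTactic false
set_option linter.unusedTactic false

lemma polar_Qform (m : ℕ) (u v : Fin m → ℂ) :
    QuadraticMap.polar (Qform m) u v = ∑ i, -(2 * u i * v i) := by
  simp only [QuadraticMap.polar, Qform, QuadraticMap.weightedSumSquares_apply]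
  rw [← Finset.sum_sub_distrib, ← Finset.sum_sub_distrib]
  refine Finset.sum_congr rfl fun i _ => ?_
  simp [smul_eq_mul]
  ring

def wv (n : ℕ) (j : Fin n) : Fin (2 * n) → ℂ :=
  (2⁻¹ : ℂ) • ((Pi.single ⟨j.val, by have := j.isLt; omega⟩ 1 : Fin (2*n) → ℂ)
    - Complex.I • (Pi.single ⟨n + j.val, by have := j.isLt; omega⟩ 1 : Fin (2*n) → ℂ))
def wvd (n : ℕ) (j : Fin n) : Fin (2 * n) → ℂ :=
  -((2⁻¹ : ℂ) • ((Pi.single ⟨j.val, by have := j.isLt; omega⟩ 1 : Fin (2*n) → ℂ)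
    + Complex.I • (Pi.single ⟨n + j.val, by have := j.isLt; omega⟩ 1 : Fin (2*n) → ℂ)))

lemma fw_eq (n : ℕ) (j : Fin n) : fw n j = CliffordAlgebra.ι (Qform (2*n)) (wv n j) := by
  simp [fw, gen, wv, map_smul, map_sub]
lemma fwd_eq (n : ℕ) (j : Fin n) : fwd n j = CliffordAlgebra.ι (Qform (2*n)) (wvd n j) := by
  simp [fwd, gen, wvd, map_smul, map_add, map_neg]

lemma sum_single_mul (m : ℕ) (x y : Fin m) :
    ∑ i, (Pi.single x 1 : Fin m → ℂ) i * (Pi.single y 1 : Fin m → ℂ) i = if x = y then 1 else 0 := by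
  simp [Pi.single_apply, ite_and, Finset.sum_ite_eq, eq_comm]

lemma dot_expand (m : ℕ) (f g : Fin m → ℂ) (α β γ δ : ℂ) (a b c d : Fin m)
    (hf : ∀ i, f i = α * (Pi.single a 1 : Fin m → ℂ) i + β * (Pi.single b 1 : Fin m → ℂ) i)
    (hg : ∀ i, g i = γ * (Pi.single c 1 : Fin m → ℂ) i + δ * (Pi.single d 1 : Fin m → ℂ) i) :
    ∑ i, f i * g i
      = α * γ * (if a = c then 1 else 0) + α * δ * (if a = d then 1 else 0)
        + β * γ * (if b = c then 1 else 0) + β * δ * (if b = d then 1 else 0) := by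
  simp_rw [hf, hg, add_mul, mul_add, Finset.sum_add_distrib, mul_mul_mul_comm,
    ← Finset.mul_sum, sum_single_mul]
  ring

lemma wv_apply (n : ℕ) (j : Fin n) (i : Fin (2*n)) :
    wv n j i = 2⁻¹ * (Pi.single ⟨j.val, by have := j.isLt; omega⟩ 1 : Fin (2*n) → ℂ) i
      + (-(Complex.I * 2⁻¹)) * (Pi.single ⟨n + j.val, by have := j.isLt; omega⟩ 1 : Fin (2*n) → ℂ) i := by
  simp [wv]; ring

lemma wvd_apply (n : ℕ) (j : Fin n) (i : Fin (2*n)) :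
    wvd n j i = (-2⁻¹) * (Pi.single ⟨j.val, by have := j.isLt; omega⟩ 1 : Fin (2*n) → ℂ) i
      + (-(Complex.I * 2⁻¹)) * (Pi.single ⟨n + j.val, by have := j.isLt; omega⟩ 1 : Fin (2*n) → ℂ) i := by
  simp [wvd]; ring

lemma fin_mk_eq_l (n : ℕ) (j k : Fin n) :
    (⟨j.val, by have := j.isLt; omega⟩ : Fin (2*n)) = ⟨k.val, by have := k.isLt; omega⟩ ↔ j = k := by
  rw [Fin.mk.injEq, Fin.val_inj]
lemma fin_mk_eq_r (n : ℕ) (j k : Fin n) :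
    (⟨n + j.val, by have := j.isLt; omega⟩ : Fin (2*n)) = ⟨n + k.val, by have := k.isLt; omega⟩ ↔ j = k := by
  rw [Fin.mk.injEq]
  constructor
  · intro h; exact Fin.val_inj.mp (by omega)
  · intro h; rw [h]
lemma fin_mk_ne (n : ℕ) (j k : Fin n) :
    (⟨j.val, by have := j.isLt; omega⟩ : Fin (2*n)) ≠ ⟨n + k.val, by have := k.isLt; omega⟩ := by
  have := j.isLt
  simp only [ne_eq, Fin.mk.injEq]
  omega

lemma dot_wv_wv (n : ℕ) (j k : Fin n) : ∑ i, wv n j i * wv n k i = 0 := by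
  rw [dot_expand (2*n) (wv n j) (wv n k) _ _ _ _ _ _ _ _ (wv_apply n j) (wv_apply n k)]
  simp only [fin_mk_eq_l, fin_mk_eq_r, if_neg (fin_mk_ne n j k), if_neg (Ne.symm (fin_mk_ne n k j))]
  by_cases h : j = k <;> simp [h] <;> ring_nf <;> rw [Complex.I_sq] <;> ring

lemma dot_wvd_wvd (n : ℕ) (j k : Fin n) : ∑ i, wvd n j i * wvd n k i = 0 := by
  rw [dot_expand (2*n) (wvd n j) (wvd n k) _ _ _ _ _ _ _ _ (wvd_apply n j) (wvd_apply n k)]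
  simp only [fin_mk_eq_l, fin_mk_eq_r, if_neg (fin_mk_ne n j k), if_neg (Ne.symm (fin_mk_ne n k j))]
  by_cases h : j = k <;> simp [h] <;> ring_nf <;> rw [Complex.I_sq] <;> ring

lemma dot_wv_wvd (n : ℕ) (j k : Fin n) :
    ∑ i, wv n j i * wvd n k i = if j = k then -2⁻¹ else 0 := by
  rw [dot_expand (2*n) (wv n j) (wvd n k) _ _ _ _ _ _ _ _ (wv_apply n j) (wvd_apply n k)]
  simp only [fin_mk_eq_l, fin_mk_eq_r, if_neg (fin_mk_ne n j k), if_neg (Ne.symm (fin_mk_ne n k j))]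
  by_cases h : j = k <;> simp [h] <;> ring_nf <;> rw [Complex.I_sq] <;> ring

lemma polar_Qform' (m : ℕ) (u v : Fin m → ℂ) :
    QuadraticMap.polar (Qform m) u v = -2 * ∑ i, u i * v i := by
  rw [polar_Qform, Finset.mul_sum]
  exact Finset.sum_congr rfl fun i _ => by ring

lemma fw_fw (n : ℕ) (j k : Fin n) : fw n j * fw n k + fw n k * fw n j = 0 := by
  rw [fw_eq, fw_eq, CliffordAlgebra.ι_mul_ι_add_swap, polar_Qform', dot_wv_wv]
  simp

lemma fwd_fwd (n : ℕ) (j k : Fin n) : fwd n j * fwd n k + fwd n k * fwd n j = 0 := by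
  rw [fwd_eq, fwd_eq, CliffordAlgebra.ι_mul_ι_add_swap, polar_Qform', dot_wvd_wvd]
  simp

lemma fw_fwd (n : ℕ) (j k : Fin n) :
    fw n j * fwd n k + fwd n k * fw n j = algebraMap ℂ (Cl (2*n)) (if j = k then 1 else 0) := by
  rw [fw_eq, fwd_eq, CliffordAlgebra.ι_mul_ι_add_swap, polar_Qform', dot_wv_wvd]
  congr 1
  by_cases h : j = k <;> simp [h] <;> ring

lemma sum_smul_mul (n : ℕ) (c d : Fin n → ℂ) (u v : Fin n → Cl (2*n)) :
    (∑ j, c j • u j) * (∑ k, d k • v k) = ∑ j, ∑ k, (c j * d k) • (u j * v k) := by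
  rw [Finset.sum_mul]
  exact Finset.sum_congr rfl fun j _ => by
    rw [Finset.mul_sum]
    exact Finset.sum_congr rfl fun k _ => smul_mul_smul_comm (c j) (u j) (d k) (v k)

lemma anticomm_sum (n : ℕ) (c d : Fin n → ℂ) (u v : Fin n → Cl (2*n))
    (R : Fin n → Fin n → Cl (2*n)) (h : ∀ j k, u j * v k + v k * u j = R j k) :
    (∑ j, c j • u j) * (∑ k, d k • v k) + (∑ k, d k • v k) * (∑ j, c j • u j)
      = ∑ j, ∑ k, (c j * d k) • R j k := by
  rw [sum_smul_mul, sum_smul_mul, Finset.sum_comm (f := fun k j => (d k * c j) • (v k * u j))]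
  rw [← Finset.sum_add_distrib]
  refine Finset.sum_congr rfl fun j _ => ?_
  rw [← Finset.sum_add_distrib]
  refine Finset.sum_congr rfl fun k _ => ?_
  rw [mul_comm (d k) (c j), ← smul_add, h]

lemma zvec_sq (n : ℕ) (c : Fin n → ℂ) : zvec n c * zvec n c = 0 := by
  have h := anticomm_sum n c c (fw n) (fw n) (fun _ _ => 0) (fw_fw n)
  simp only [smul_zero, Finset.sum_const_zero] at h
  have h2 : (2:ℂ) • (zvec n c * zvec n c) = 0 := by
    rw [two_smul]; exact h
  simpa using (smul_eq_zero.mp h2).resolve_left (by norm_num)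

lemma zvec_mul_zvecd (n : ℕ) (c : Fin n → ℂ) :
    zvec n c * zvecd n c = (∑ j, c j * (starRingEnd ℂ) (c j)) • 1 - zvecd n c * zvec n c := by
  have h := anticomm_sum n c (fun j => (starRingEnd ℂ) (c j)) (fw n) (fwd n) _ (fw_fwd n)
  rw [eq_sub_iff_add_eq, zvec, zvecd, h, Finset.sum_smul]
  refine Finset.sum_congr rfl fun j _ => ?_
  rw [Finset.sum_eq_single j]
  · simp [Algebra.algebraMap_eq_smul_one]
  · intro k _ hk
    simp [Ne.symm hk]
  · simp

lemma fw_mul_fwd (n : ℕ) (j k : Fin n) :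
    fw n j * fwd n k = algebraMap ℂ (Cl (2*n)) (if j = k then 1 else 0) - fwd n k * fw n j := by
  rw [eq_sub_iff_add_eq, fw_fwd]
lemma fw_mul_fw (n : ℕ) (j k : Fin n) : fw n j * fw n k = - (fw n k * fw n j) := by
  rw [eq_neg_iff_add_eq_zero, fw_fw]

lemma fw_mul_beta (n : ℕ) (j : Fin n) :
    fw n j * beta n = beta n * fw n j + fw n j := by
  rw [beta, Finset.mul_sum, Finset.sum_mul]
  have key : ∀ k, fw n j * (fwd n k * fw n k)
      = fwd n k * fw n k * fw n j + (if j = k then 1 else 0 : ℂ) • fw n k := by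
    intro k
    rw [← mul_assoc, fw_mul_fwd, sub_mul, mul_assoc, fw_mul_fw n j k, mul_neg, sub_neg_eq_add,
      Algebra.algebraMap_eq_smul_one, smul_mul_assoc, one_mul, mul_assoc]
    exact add_comm _ _
  rw [Finset.sum_congr rfl fun k _ => key k, Finset.sum_add_distrib]
  congr 1
  rw [Finset.sum_eq_single j] <;> simp +contextual [Ne.symm]

lemma zvec_mul_beta (n : ℕ) (c : Fin n → ℂ) :
    zvec n c * beta n = beta n * zvec n c + zvec n c := by
  rw [zvec, Finset.sum_mul, Finset.mul_sum, ← Finset.sum_add_distrib]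
  refine Finset.sum_congr rfl fun j _ => ?_
  rw [smul_mul_assoc, fw_mul_beta, mul_smul_comm, smul_add]

lemma sum_fw_fwd (n : ℕ) :
    ∑ j, fw n j * fwd n j = (n : ℂ) • (1 : Cl (2*n)) - beta n := by
  rw [beta, eq_sub_iff_add_eq, ← Finset.sum_add_distrib]
  have : ∀ j ∈ Finset.univ, fw n j * fwd n j + fwd n j * fw n j = (1 : Cl (2*n)) := by
    intro j _
    rw [fw_fwd]; simp
  rw [Finset.sum_congr rfl this]
  simp [Algebra.smul_def]

lemma zvec_zvecd_zvec (n : ℕ) (c : Fin n → ℂ) :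
    zvec n c * (zvecd n c * zvec n c)
      = (∑ j, c j * (starRingEnd ℂ) (c j)) • zvec n c := by
  rw [← mul_assoc, zvec_mul_zvecd, sub_mul, smul_mul_assoc, one_mul, mul_assoc, zvec_sq,
    mul_zero, sub_zero]

/-! Coordinate evaluations. -/

lemma zc_ex (n : ℕ) (j : Fin n) :
    zc n (ex n j) = fun k => ((Pi.single j 1 : Fin n → ℝ) k : ℂ) := by
  funext k
  simp [zc, ex]

lemma zc_ey (n : ℕ) (j : Fin n) :
    zc n (ey n j) = fun k => Complex.I * ((Pi.single j 1 : Fin n → ℝ) k : ℂ) := by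
  funext k
  simp [zc, ey]

lemma zvec_ex (n : ℕ) (j : Fin n) : zvec n (zc n (ex n j)) = fw n j := by
  rw [zvec, zc_ex, Finset.sum_eq_single j]
  · simp
  · intro k _ hk; simp [Pi.single_apply, Ne.symm hk]
  · simp

lemma zvecd_ex (n : ℕ) (j : Fin n) : zvecd n (zc n (ex n j)) = fwd n j := by
  rw [zvecd, zc_ex, Finset.sum_eq_single j]
  · simp
  · intro k _ hk; simp [Pi.single_apply, Ne.symm hk]
  · simp

lemma zvec_ey (n : ℕ) (j : Fin n) : zvec n (zc n (ey n j)) = Complex.I • fw n j := by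
  rw [zvec, zc_ey, Finset.sum_eq_single j]
  · simp
  · intro k _ hk; simp [Pi.single_apply, Ne.symm hk]
  · simp

lemma zvecd_ey (n : ℕ) (j : Fin n) : zvecd n (zc n (ey n j)) = (-Complex.I) • fwd n j := by
  rw [zvecd, zc_ey, Finset.sum_eq_single j]
  · simp
  · intro k _ hk; simp [Pi.single_apply, Ne.symm hk]
  · simp

/-- The directional derivative of `ν`. -/
def sOf (n : ℕ) (pt v : Dom n) : ℝ := 2 * ∑ j, (pt.1 j * v.1 j + pt.2 j * v.2 j)

lemma sOf_ex (n : ℕ) (pt : Dom n) (j : Fin n) : sOf n pt (ex n j) = 2 * pt.1 j := by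
  rw [sOf]
  congr 1
  rw [Finset.sum_eq_single j]
  · simp [ex]
  · intro k _ hk; simp [ex, Pi.single_apply, Ne.symm hk]
  · simp

lemma sOf_ey (n : ℕ) (pt : Dom n) (j : Fin n) : sOf n pt (ey n j) = 2 * pt.2 j := by
  rw [sOf]
  congr 1
  rw [Finset.sum_eq_single j]
  · simp [ey]
  · intro k _ hk; simp [ey, Pi.single_apply, Ne.symm hk]
  · simp

lemma nu_line (n : ℕ) (pt v : Dom n) (t : ℝ) :
    nu n (pt + t • v) = nu n pt + sOf n pt v * t + nu n v * t ^ 2 := by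
  simp only [nu, sOf, Prod.fst_add, Prod.snd_add, Prod.smul_fst, Prod.smul_snd,
    Pi.add_apply, Pi.smul_apply, smul_eq_mul]
  rw [Finset.sum_mul, Finset.mul_sum, Finset.sum_mul, ← Finset.sum_add_distrib,
    ← Finset.sum_add_distrib]
  refine Finset.sum_congr rfl fun j _ => ?_
  ring

lemma zc_line (n : ℕ) (pt v : Dom n) (t : ℝ) :
    zc n (pt + t • v) = fun j => zc n pt j + (t : ℂ) * zc n v j := by
  funext j
  simp only [zc, Prod.fst_add, Prod.snd_add, Prod.smul_fst, Prod.smul_snd,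
    Pi.add_apply, Pi.smul_apply, smul_eq_mul]
  push_cast
  ring

lemma zvec_line (n : ℕ) (z w : Fin n → ℂ) (t : ℝ) :
    zvec n (fun j => z j + (t : ℂ) * w j) = zvec n z + (t : ℂ) • zvec n w := by
  simp only [zvec, add_smul, mul_smul, Finset.sum_add_distrib, Finset.smul_sum]

lemma zvecd_line (n : ℕ) (z w : Fin n → ℂ) (t : ℝ) :
    zvecd n (fun j => z j + (t : ℂ) * w j) = zvecd n z + (t : ℂ) • zvecd n w := by
  simp only [zvecd, map_add, map_mul, Complex.conj_ofReal, add_smul, mul_smul,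
    Finset.sum_add_distrib, Finset.smul_sum]

/-- `M(pt) = 𝐳†𝐳` as a function of the point. -/
def Mfun (n : ℕ) (pt : Dom n) : Cl (2 * n) := zvecd n (zc n pt) * zvec n (zc n pt)

/-- The directional derivative of `Mfun`. -/
def Bfun (n : ℕ) (pt v : Dom n) : Cl (2 * n) :=
  zvecd n (zc n v) * zvec n (zc n pt) + zvecd n (zc n pt) * zvec n (zc n v)

lemma Mfun_line (n : ℕ) (pt v : Dom n) (t : ℝ) :
    Mfun n (pt + t • v)
      = Mfun n pt + (t : ℂ) • Bfun n pt v + ((t : ℂ))^2 • Mfun n v := by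
  simp only [Mfun, Bfun, zc_line, zvec_line, zvecd_line]
  simp only [mul_add, add_mul, smul_mul_assoc, mul_smul_comm, smul_smul, smul_add]
  module

lemma nu_eq_sum (n : ℕ) (pt : Dom n) :
    (∑ j, zc n pt j * (starRingEnd ℂ) (zc n pt j)) = (nu n pt : ℂ) := by
  rw [nu]
  push_cast
  refine Finset.sum_congr rfl fun j _ => ?_
  simp only [zc, map_add, map_mul, Complex.conj_ofReal, Complex.conj_I]
  ring_nf
  rw [Complex.I_sq]
  ring

/-- The candidate derivative of `F`. -/
def Fder (n : ℕ) (a₁ a₂ : ℝ → ℂ) (pt v : Dom n) : Cl (2 * n) :=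
  ((sOf n pt v : ℂ) * deriv a₁ (nu n pt)) • 1
    + ((sOf n pt v : ℂ) * deriv a₂ (nu n pt)) • Mfun n pt
    + a₂ (nu n pt) • Bfun n pt v

end Aux

/-- For differentiable `a₁, a₂ : ℝ → ℂ` and
`F = a₁(ν)·1 + a₂(ν)·𝐳†𝐳` with `ν = |z|²`, the function `F` is differentiable and
`∂_z† F = (a₁′(ν) + (n+1)a₂(ν) + ν a₂′(ν))·𝐳 − a₂(ν)·𝐳β`. -/
theorem Dzd_of_axial (n : ℕ) (hn : 1 ≤ n) (a₁ a₂ : ℝ → ℂ)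
    (ha₁ : Differentiable ℝ a₁) (ha₂ : Differentiable ℝ a₂)
    (F : Dom n → Cl (2 * n))
    (hF : ∀ pt, F pt = a₁ (nu n pt) • (1 : Cl (2 * n)) +
      a₂ (nu n pt) • (zvecd n (zc n pt) * zvec n (zc n pt))) :
    ∃ F' : Dom n → Dom n → Cl (2 * n), IsWeakLineDeriv n F F' ∧
      ∀ pt, DzdOf n F' pt =
        (deriv a₁ (nu n pt) + ((n : ℂ) + 1) * a₂ (nu n pt)
            + (nu n pt : ℂ) * deriv a₂ (nu n pt)) • zvec n (zc n pt)
          - a₂ (nu n pt) • (zvec n (zc n pt) * beta n) := by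
  classical
  refine ⟨Fder n a₁ a₂, ?_, ?_⟩
  · -- differentiability
    intro φ pt v
    show HasDerivAt (fun t : ℝ => φ (F (pt + t • v))) (φ (Fder n a₁ a₂ pt v)) 0
    set u : ℝ → ℝ := fun t => nu n pt + sOf n pt v * t + nu n v * t ^ 2 with hu_def
    have hfun : ∀ t : ℝ, φ (F (pt + t • v))
        = a₁ (u t) * φ 1
          + a₂ (u t)
            * (φ (Mfun n pt) + (t:ℂ) * φ (Bfun n pt v) + (t:ℂ)^2 * φ (Mfun n v)) := by
      intro t
      rw [hF, nu_line]
      have hM : zvecd n (zc n (pt + t • v)) * zvec n (zc n (pt + t • v))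
          = Mfun n (pt + t • v) := rfl
      rw [hM, Mfun_line]
      simp only [map_add, map_smul, smul_eq_mul, u]
      try ring
    have heq : (fun t : ℝ => φ (F (pt + t • v)))
        = fun t => a₁ (u t) * φ 1
          + a₂ (u t)
            * (φ (Mfun n pt) + (t:ℂ) * φ (Bfun n pt v) + (t:ℂ)^2 * φ (Mfun n v)) :=
      funext hfun
    rw [heq]
    have hu : HasDerivAt u (sOf n pt v) 0 := by
      have h1 : HasDerivAt (fun t : ℝ => sOf n pt v * t) (sOf n pt v) 0 := by
        simpa using (hasDerivAt_id (0:ℝ)).const_mul (sOf n pt v)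
      have h2 : HasDerivAt (fun t : ℝ => nu n v * t ^ 2) 0 0 := by
        simpa using (hasDerivAt_pow 2 (0:ℝ)).const_mul (nu n v)
      have := ((hasDerivAt_const (0:ℝ) (nu n pt)).add h1).add h2
      simp only [zero_add, add_zero] at this
      exact this
    have hu0 : u 0 = nu n pt := by simp [hu_def]
    have h1 : HasDerivAt (fun t => a₁ (u t))
        (sOf n pt v • deriv a₁ (nu n pt)) 0 := by
      have h := HasDerivAt.scomp (0:ℝ) (h := u) (ha₁ (u 0)).hasDerivAt hu
      rw [hu0] at h
      exact h
    have h2 : HasDerivAt (fun t => a₂ (u t))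
        (sOf n pt v • deriv a₂ (nu n pt)) 0 := by
      have h := HasDerivAt.scomp (0:ℝ) (h := u) (ha₂ (u 0)).hasDerivAt hu
      rw [hu0] at h
      exact h
    have hre : HasDerivAt (fun t : ℝ => (t : ℂ)) 1 0 := by
      have := Complex.ofRealCLM.hasDerivAt (x := (0:ℝ))
      simp at this
      exact this
    have hp : HasDerivAt
        (fun t : ℝ => φ (Mfun n pt) + (t:ℂ) * φ (Bfun n pt v) + (t:ℂ)^2 * φ (Mfun n v))
        (φ (Bfun n pt v)) 0 := by
      have hb : HasDerivAt (fun t : ℝ => (t:ℂ) * φ (Bfun n pt v)) (φ (Bfun n pt v)) 0 := by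
        simpa using hre.mul_const (φ (Bfun n pt v))
      have hc : HasDerivAt (fun t : ℝ => (t:ℂ)^2 * φ (Mfun n v)) 0 0 := by
        have h2sq := (hre.mul hre).mul_const (φ (Mfun n v))
        simpa [pow_two] using h2sq
      have := ((hasDerivAt_const (0:ℝ) (φ (Mfun n pt))).add hb).add hc
      simp only [zero_add, add_zero] at this
      exact this
    have htot := (h1.mul_const (φ 1)).add (h2.mul hp)
    convert htot using 1
    · rfl
    · rfl
    simp only [Fder, map_add, map_smul, smul_eq_mul, hu0]
    push_cast
    simp only [Complex.real_smul]
    ring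
  · -- the value of the Dirac operator
    intro pt
    rw [DzdOf]
    have hterm : ∀ j : Fin n,
        (2⁻¹ : ℂ) • (Fder n a₁ a₂ pt (ex n j) + Complex.I • Fder n a₁ a₂ pt (ey n j))
          = (deriv a₁ (nu n pt) * zc n pt j) • 1
            + (deriv a₂ (nu n pt) * zc n pt j) • Mfun n pt
            + a₂ (nu n pt) • (fwd n j * zvec n (zc n pt)) := by
      intro j
      rw [Fder, Fder, sOf_ex, sOf_ey, Bfun, Bfun, zvec_ex, zvecd_ex, zvec_ey, zvecd_ey,
        smul_mul_assoc, mul_smul_comm]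
      have hz : zc n pt j = (pt.1 j : ℂ) + Complex.I * pt.2 j := rfl
      rw [hz]
      push_cast
      match_scalars <;> ring_nf <;> rw [Complex.I_sq] <;> ring
    have hstep : ∀ j : Fin n,
        fw n j * ((2⁻¹ : ℂ) • (Fder n a₁ a₂ pt (ex n j) + Complex.I • Fder n a₁ a₂ pt (ey n j)))
          = (deriv a₁ (nu n pt) * zc n pt j) • fw n j
            + (deriv a₂ (nu n pt) * zc n pt j) • (fw n j * Mfun n pt)
            + a₂ (nu n pt) • (fw n j * fwd n j * zvec n (zc n pt)) := by
      intro j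
      rw [hterm j, mul_add, mul_add, mul_smul_comm, mul_smul_comm, mul_smul_comm, mul_one,
        mul_assoc]
    rw [Finset.sum_congr rfl fun j _ => hstep j, Finset.sum_add_distrib, Finset.sum_add_distrib]
    have hS1 : ∑ j, (deriv a₁ (nu n pt) * zc n pt j) • fw n j
        = deriv a₁ (nu n pt) • zvec n (zc n pt) := by
      rw [zvec, Finset.smul_sum]
      exact Finset.sum_congr rfl fun j _ => mul_smul _ _ _
    have hS2 : ∑ j, (deriv a₂ (nu n pt) * zc n pt j) • (fw n j * Mfun n pt)
        = (deriv a₂ (nu n pt) * (nu n pt : ℂ)) • zvec n (zc n pt) := by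
      have hZM : zvec n (zc n pt) * Mfun n pt = (nu n pt : ℂ) • zvec n (zc n pt) := by
        rw [Mfun, ← nu_eq_sum]
        exact zvec_zvecd_zvec n (zc n pt)
      calc ∑ j, (deriv a₂ (nu n pt) * zc n pt j) • (fw n j * Mfun n pt)
          = deriv a₂ (nu n pt) • (zvec n (zc n pt) * Mfun n pt) := by
            rw [zvec, Finset.sum_mul, Finset.smul_sum]
            refine Finset.sum_congr rfl fun j _ => ?_
            rw [smul_mul_assoc, mul_smul]
        _ = (deriv a₂ (nu n pt) * (nu n pt : ℂ)) • zvec n (zc n pt) := by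
            rw [hZM, smul_smul]
    have hS3 : ∑ j, a₂ (nu n pt) • (fw n j * fwd n j * zvec n (zc n pt))
        = a₂ (nu n pt) • ((((n : ℂ) • (1 : Cl (2*n))) - beta n) * zvec n (zc n pt)) := by
      rw [← Finset.smul_sum, ← Finset.sum_mul, sum_fw_fwd]
    rw [hS1, hS2, hS3]
    have hb : beta n * zvec n (zc n pt) = zvec n (zc n pt) * beta n - zvec n (zc n pt) := by
      rw [eq_sub_iff_add_eq, ← zvec_mul_beta]
    rw [sub_mul, smul_mul_assoc, one_mul, hb]
    module
end
end
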